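/- Climbing lemma: let A ⊆ 2^ω be measurable, s a finite binary string with μ(A_s) > 0, and r a real with μ(A_s) < r < 1. Then there exists a string t properly extending s with μ(A_t) ≥ r and such that for every u with s ⊆ u ⊊ t one has μ(A_u) ≥ μ(A_s). -/

import Mathlib

open MeasureTheory Filter Topology Set
open scoped ENNReal symmDiff

noncomputable section

/-- The Cantor space `2^ω`. -/
abbrev Cantor : Type := ℕ → Bool

/-- The first `n` digits of `x` as a finite binary string. -/
def seg (x : Cantor) (n : ℕ) : List Bool := List.ofFn (fun i : Fin n => x i)

/-- The basic clopen set `N_s` of all extensions of the finite string `s`. -/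
def cyl (s : List Bool) : Set Cantor := {x | seg x s.length = s}

/-- Concatenation `s⌢x` of a finite string with an infinite sequence. -/
def cat (s : List Bool) (x : Cantor) : Cantor :=
  fun n => if h : n < s.length then s.get ⟨n, h⟩ else x (n - s.length)

/-- The localization `A_s = {x : s⌢x ∈ A}` of `A` at `s`. -/
def loc (s : List Bool) (A : Set Cantor) : Set Cantor := {x | cat s x ∈ A}

/-- `Φ(A)`: the set of points of density `1` in `A`. -/
def dens1 (μ : Measure Cantor) (A : Set Cantor) : Set Cantor :=
  {x | Tendsto (fun n => μ (A ∩ cyl (seg x n)) / μ (cyl (seg x n))) atTop (𝓝 1)}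

/-- `μ` is the coin-tossing (Lebesgue) measure on Cantor space:
it gives each basic clopen set `N_s` measure `2^{-|s|}`. -/
def IsCoin (μ : Measure Cantor) : Prop :=
  ∀ s : List Bool, μ (cyl s) = (2 : ℝ≥0∞)⁻¹ ^ s.length


@[simp] lemma seg_length (x : Cantor) (n : ℕ) : (seg x n).length = n := by simp [seg]

lemma seg_getElem (x : Cantor) (n : ℕ) (i : ℕ) (h : i < (seg x n).length) :
    (seg x n)[i] = x i := by simp [seg]

lemma seg_take (x : Cantor) {k n : ℕ} (h : k ≤ n) : (seg x n).take k = seg x k := by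
  apply List.ext_getElem (by simp [h])
  intro i h1 h2
  simp only [List.getElem_take]
  rw [seg_getElem, seg_getElem]

lemma seg_prefix (x : Cantor) {k n : ℕ} (h : k ≤ n) : seg x k <+: seg x n := by
  rw [← seg_take x h]; exact List.take_prefix _ _

lemma prefix_seg {w : List Bool} {x : Cantor} {n : ℕ} (h : w <+: seg x n) :
    w = seg x w.length := by
  have hl : w.length ≤ n := by simpa using h.length_le
  rw [List.prefix_iff_eq_take] at h
  conv_lhs => rw [h]
  rw [seg_take x hl]

lemma mem_cyl {x : Cantor} {v : List Bool} : x ∈ cyl v ↔ seg x v.length = v := Iff.rfl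

lemma mem_cyl_iff {x : Cantor} {v : List Bool} :
    x ∈ cyl v ↔ ∀ i, (h : i < v.length) → x i = v[i] := by
  constructor
  · intro hx i h
    rw [← seg_getElem x v.length i (by simp [h])]
    exact List.getElem_of_eq hx _
  · intro h
    apply List.ext_getElem (by simp)
    intro i h1 h2
    rw [seg_getElem]
    exact h i h2

@[simp] lemma cyl_nil : cyl ([] : List Bool) = Set.univ := by
  ext x; simp [mem_cyl, seg]

lemma cat_mem_cyl (v : List Bool) (x : Cantor) : cat v x ∈ cyl v := by
  rw [mem_cyl_iff]
  intro i h
  simp [cat, h]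

lemma seg_cat_le (v : List Bool) (x : Cantor) {n : ℕ} (h : n ≤ v.length) :
    seg (cat v x) n = v.take n := by
  apply List.ext_getElem (by simp [h])
  intro i h1 h2
  rw [seg_getElem, List.getElem_take]
  have : i < v.length := by simp at h1; omega
  simp [cat, this]

lemma seg_cat_add (v : List Bool) (x : Cantor) (k : ℕ) :
    seg (cat v x) (v.length + k) = v ++ seg x k := by
  apply List.ext_getElem (by simp)
  intro i h1 h2
  rw [seg_getElem]
  by_cases hi : i < v.length
  · simp [cat, hi, List.getElem_append_left hi]
  · have hi' : i - v.length < k := by simp at h1; omega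
    rw [List.getElem_append_right (by omega)]
    simp only [cat, dif_neg hi]
    rw [seg_getElem]

lemma cat_cat (s v : List Bool) (x : Cantor) : cat (s ++ v) x = cat s (cat v x) := by
  funext n
  simp only [cat, List.length_append]
  by_cases h1 : n < s.length
  · rw [dif_pos (by omega), dif_pos h1]
    simp [List.getElem_append_left h1]
  · rw [dif_neg h1]
    by_cases h2 : n < s.length + v.length
    · rw [dif_pos h2, dif_pos (by omega)]
      simp [List.getElem_append_right (le_of_not_gt h1)]
    · rw [dif_neg h2, dif_neg (by omega)]
      congr 1; omega

lemma loc_append (s v : List Bool) (A : Set Cantor) : loc (s ++ v) A = loc v (loc s A) := by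
  ext x; simp [loc, cat_cat]

lemma measurableSet_cyl (v : List Bool) : MeasurableSet (cyl v) := by
  have : cyl v = ⋂ i : Fin v.length, (fun x : Cantor => x (i : ℕ)) ⁻¹' {v[(i : ℕ)]} := by
    ext x
    simp only [mem_cyl_iff, Set.mem_iInter, Set.mem_preimage, Set.mem_singleton_iff]
    exact ⟨fun h i => h i i.2, fun h i hi => h ⟨i, hi⟩⟩
  rw [this]
  exact MeasurableSet.iInter fun i =>
    measurable_pi_apply _ (MeasurableSet.singleton _)

lemma measurable_cat (v : List Bool) : Measurable (cat v) := by
  rw [measurable_pi_iff]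
  intro n
  by_cases h : n < v.length
  · simp only [cat, dif_pos h]; exact measurable_const
  · simp only [cat, dif_neg h]; exact measurable_pi_apply _

lemma measurableSet_loc {A : Set Cantor} (hA : MeasurableSet A) (v : List Bool) :
    MeasurableSet (loc v A) := measurable_cat v hA

lemma cyl_comparable {w₁ w₂ : List Bool} {z : Cantor} (h1 : z ∈ cyl w₁) (h2 : z ∈ cyl w₂) :
    w₁ <+: w₂ ∨ w₂ <+: w₁ := by
  rw [mem_cyl] at h1 h2
  rcases le_total w₁.length w₂.length with h | h
  · left; rw [← h1, ← h2]; exact seg_prefix z h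
  · right; rw [← h1, ← h2]; exact seg_prefix z h

lemma cyl_anti {u v : List Bool} (h : u <+: v) : cyl v ⊆ cyl u := by
  intro x hx
  rw [mem_cyl] at hx ⊢
  exact (prefix_seg (x := x) (n := v.length) (by rw [hx]; exact h)).symm

lemma cantor_generateFrom :
    (inferInstance : MeasurableSpace Cantor) = .generateFrom (Set.range cyl) := by
  refine le_antisymm ?_ (MeasurableSpace.generateFrom_le ?_)
  · show (⨆ i : ℕ, (⊤ : MeasurableSpace Bool).comap fun x : Cantor => x i) ≤ _
    refine iSup_le fun i => Measurable.comap_le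
      (?_ : @Measurable _ _ (.generateFrom (Set.range cyl)) ⊤ fun x : Cantor => x i)
    intro t _
    rw [← Set.biUnion_preimage_singleton]
    refine MeasurableSet.biUnion (Set.to_countable t) fun b _ => ?_
    have : (fun x : Cantor => x i) ⁻¹' {b} =
        ⋃ v ∈ {v : List Bool | v.length = i + 1 ∧ v.getD i false = b}, cyl v := by
      ext x
      simp only [Set.mem_preimage, Set.mem_singleton_iff, Set.mem_iUnion, Set.mem_setOf_eq]
      constructor
      · intro hx
        refine ⟨seg x (i + 1), ⟨by simp, ?_⟩, ?_⟩
        · rw [List.getD_eq_getElem _ _ (by simp), seg_getElem, hx]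
        · rw [mem_cyl, seg_length]
      · rintro ⟨v, ⟨hv1, hv2⟩, hxv⟩
        have hi : i < v.length := by omega
        rw [mem_cyl_iff] at hxv
        rw [hxv i hi, ← hv2, List.getD_eq_getElem _ _ hi]
    rw [this]
    exact MeasurableSet.biUnion (Set.to_countable _)
      (fun v _ => MeasurableSpace.measurableSet_generateFrom ⟨v, rfl⟩)
  · rintro _ ⟨v, rfl⟩
    exact measurableSet_cyl v

lemma isPiSystem_cyl : IsPiSystem (Set.range cyl) := by
  rintro _ ⟨u, rfl⟩ _ ⟨v, rfl⟩ ⟨z, hz1, hz2⟩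
  rcases cyl_comparable hz1 hz2 with h | h
  · rw [Set.inter_eq_right.2 (cyl_anti h)]
    exact ⟨v, rfl⟩
  · rw [Set.inter_eq_left.2 (cyl_anti h)]
    exact ⟨u, rfl⟩

lemma coin_univ {μ : Measure Cantor} (hμ : IsCoin μ) : μ Set.univ = 1 := by
  have := hμ []
  simpa using this

lemma coin_finite {μ : Measure Cantor} (hμ : IsCoin μ) : IsFiniteMeasure μ :=
  ⟨by rw [coin_univ hμ]; exact ENNReal.one_lt_top⟩

lemma cat_preimage_cyl_of_prefix {u v : List Bool} (h : u <+: v) :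
    cat v ⁻¹' cyl u = Set.univ := by
  ext x
  simp only [Set.mem_preimage, Set.mem_univ, iff_true]
  exact cyl_anti h (cat_mem_cyl v x)

lemma cat_preimage_cyl_append (v w : List Bool) :
    cat v ⁻¹' cyl (v ++ w) = cyl w := by
  ext x
  simp only [Set.mem_preimage, mem_cyl, List.length_append]
  rw [seg_cat_add]
  constructor
  · intro h
    exact List.append_cancel_left h
  · intro h; rw [h]

lemma cat_preimage_cyl_incomp {u v : List Bool} (h1 : ¬ u <+: v) (h2 : ¬ v <+: u) :
    cat v ⁻¹' cyl u = ∅ := by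
  ext x
  simp only [Set.mem_preimage, Set.mem_empty_iff_false, iff_false]
  intro hx
  rcases cyl_comparable hx (cat_mem_cyl v x) with h | h
  · exact h1 h
  · exact h2 h

lemma cyl_inter_incomp {u v : List Bool} (h1 : ¬ u <+: v) (h2 : ¬ v <+: u) :
    cyl u ∩ cyl v = ∅ := by
  ext z
  simp only [Set.mem_inter_iff, Set.mem_empty_iff_false, iff_false]
  rintro ⟨hz1, hz2⟩
  rcases cyl_comparable hz1 hz2 with h | h
  · exact h1 h
  · exact h2 h

/-- Self-similarity of the coin measure. -/
lemma meas_inter_cyl {μ : Measure Cantor} (hμ : IsCoin μ) (v : List Bool)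
    {B : Set Cantor} (hB : MeasurableSet B) :
    μ (B ∩ cyl v) = 2⁻¹ ^ v.length * μ (loc v B) := by
  haveI : IsFiniteMeasure μ := coin_finite hμ
  have key : μ.restrict (cyl v) = ((2 : ℝ≥0∞)⁻¹ ^ v.length) • μ.map (cat v) := by
    refine ext_of_generate_finite _ cantor_generateFrom isPiSystem_cyl ?_ ?_
    · rintro _ ⟨u, rfl⟩
      rw [Measure.restrict_apply (measurableSet_cyl u), Measure.smul_apply,
        Measure.map_apply (measurable_cat v) (measurableSet_cyl u), smul_eq_mul]
      by_cases h1 : u <+: v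
      · rw [Set.inter_eq_right.2 (cyl_anti h1), cat_preimage_cyl_of_prefix h1,
          coin_univ hμ, hμ v, mul_one]
      · by_cases h2 : v <+: u
        · obtain ⟨w, rfl⟩ := h2
          rw [Set.inter_eq_left.2 (cyl_anti (List.prefix_append v w)),
            cat_preimage_cyl_append, hμ _, hμ _, List.length_append, pow_add]
        · rw [cyl_inter_incomp h1 h2, cat_preimage_cyl_incomp h1 h2]
          simp
    · rw [Measure.restrict_apply_univ, Measure.smul_apply,
        Measure.map_apply (measurable_cat v) MeasurableSet.univ]
      simp only [Set.preimage_univ, smul_eq_mul]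
      rw [coin_univ hμ, hμ v, mul_one]
  have := congrArg (fun ν : Measure Cantor => ν B) key
  simp only [Measure.restrict_apply hB, Measure.smul_apply, smul_eq_mul,
    Measure.map_apply (measurable_cat v) hB] at this
  exact this

lemma loc_le_one {μ : Measure Cantor} (hμ : IsCoin μ) (v : List Bool) (B : Set Cantor) :
    μ (loc v B) ≤ 1 := by
  rw [← coin_univ hμ]
  exact measure_mono (Set.subset_univ _)

lemma exists_cyl_subset {U : Set Cantor} (hU : IsOpen U) {x : Cantor} (hx : x ∈ U) :
    ∃ n, cyl (seg x n) ⊆ U := by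
  rw [isOpen_pi_iff] at hU
  obtain ⟨I, u, hIu, hsub⟩ := hU x hx
  classical
  refine ⟨(I.sup id) + 1, fun y hy => hsub ?_⟩
  rw [Set.mem_pi]
  intro i hi
  have hyx : y i = x i := by
    rw [mem_cyl_iff] at hy
    have hlen : i < (seg x (I.sup id + 1)).length := by
      rw [seg_length]
      exact lt_of_le_of_lt (Finset.le_sup (f := id) hi) (Nat.lt_succ_self _)
    rw [hy i hlen, seg_getElem]
  rw [hyx]; exact (hIu i hi).2

lemma measurableSet_E {μ : Measure Cantor} (B : Set Cantor) (r : ℝ≥0∞) :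
    MeasurableSet {x : Cantor | ∀ n, μ (loc (seg x n) B) < r} := by
  have : {x : Cantor | ∀ n, μ (loc (seg x n) B) < r} =
      ⋂ n, ⋃ v ∈ {v : List Bool | v.length = n ∧ μ (loc v B) < r}, cyl v := by
    ext x
    simp only [Set.mem_setOf_eq, Set.mem_iInter, Set.mem_iUnion, Set.mem_setOf_eq]
    constructor
    · intro h n
      exact ⟨seg x n, ⟨seg_length x n, h n⟩, by rw [mem_cyl, seg_length]⟩
    · rintro h n
      obtain ⟨v, ⟨hv1, hv2⟩, hxv⟩ := h n
      rw [mem_cyl] at hxv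
      rw [← hv1, hxv]
      exact hv2
  rw [this]
  exact MeasurableSet.iInter fun n =>
    MeasurableSet.biUnion (Set.to_countable _) fun v _ => measurableSet_cyl v

/-- The key "density" lemma: the part of `B` all of whose nodes have relative measure `< r`
is null. -/
lemma density_zero {μ : Measure Cantor} (hμ : IsCoin μ) {B : Set Cantor}
    (hB : MeasurableSet B) {r : ℝ≥0∞} (hr0 : 0 < r) (hr2 : r < 1) :
    μ (B ∩ {x | ∀ n, μ (loc (seg x n) B) < r}) = 0 := by
  classical
  haveI : IsFiniteMeasure μ := coin_finite hμ
  set E := {x : Cantor | ∀ n, μ (loc (seg x n) B) < r} with hE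
  -- main covering estimate
  have key : ∀ U : Set Cantor, IsOpen U → (B ∩ E) ⊆ U → μ (B ∩ E) ≤ r * μ U := by
    intro U hU hBEU
    set C : Set (List Bool) :=
      {v | cyl v ⊆ U ∧ μ (loc v B) < r ∧ ∀ w, w <+: v → w ≠ v → ¬ cyl w ⊆ U} with hC
    have hdisj : C.PairwiseDisjoint cyl := by
      intro v₁ hv₁ v₂ hv₂ hne
      rw [Function.onFun, Set.disjoint_iff_inter_eq_empty]
      by_contra hcon
      obtain ⟨z, hz1, hz2⟩ := Set.nonempty_iff_ne_empty.2 hcon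
      rcases cyl_comparable hz1 hz2 with h | h
      · exact hv₂.2.2 v₁ h hne hv₁.1
      · exact hv₁.2.2 v₂ h (Ne.symm hne) hv₂.1
    have hcover : B ∩ E ⊆ ⋃ v ∈ C, (B ∩ cyl v) := by
      intro x hx
      obtain ⟨hn⟩ := exists_cyl_subset hU (hBEU hx)
      have hex : ∃ n, cyl (seg x n) ⊆ U := exists_cyl_subset hU (hBEU hx)
      set N := Nat.find hex with hN
      refine Set.mem_biUnion (show seg x N ∈ C from ?_) ⟨hx.1, by rw [mem_cyl, seg_length]⟩
      refine ⟨Nat.find_spec hex, hx.2 N, ?_⟩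
      intro w hw hwne
      have hw' : w = seg x w.length := prefix_seg hw
      have hlt : w.length < N := by
        have hle : w.length ≤ N := by simpa using hw.length_le
        rcases lt_or_eq_of_le hle with h | h
        · exact h
        · exfalso; apply hwne; rw [hw', h]
      rw [hw']
      exact Nat.find_min hex hlt
    have hsub : ∀ v ∈ C, cyl v ⊆ U := fun v hv => hv.1
    calc μ (B ∩ E) ≤ μ (⋃ v ∈ C, (B ∩ cyl v)) := measure_mono hcover
      _ ≤ ∑' v : C, μ (B ∩ cyl (v : List Bool)) := measure_biUnion_le μ (Set.to_countable C) _
      _ ≤ ∑' v : C, r * μ (cyl (v : List Bool)) := by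
          refine ENNReal.tsum_le_tsum fun v => ?_
          rw [meas_inter_cyl hμ _ hB, hμ]
          rw [mul_comm (r : ℝ≥0∞)]
          exact mul_le_mul_right (le_of_lt v.2.2.1) _
      _ = r * ∑' v : C, μ (cyl (v : List Bool)) := ENNReal.tsum_mul_left
      _ = r * μ (⋃ v ∈ C, cyl v) := by
          rw [measure_biUnion (Set.to_countable C) hdisj fun v _ => measurableSet_cyl v]
      _ ≤ r * μ U := by
          exact mul_le_mul_right (measure_mono (Set.iUnion₂_subset hsub)) r
  -- from the estimate to nullity
  have hmeas : MeasurableSet (B ∩ E) := hB.inter (measurableSet_E B r)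
  by_contra hpos
  have hpos' : 0 < μ (B ∩ E) := pos_iff_ne_zero.2 hpos
  have hfin : μ (B ∩ E) ≠ ∞ := measure_ne_top μ _
  have hlt : μ (B ∩ E) < μ (B ∩ E) / r := by
    rw [ENNReal.lt_div_iff_mul_lt (Or.inl hr0.ne') (Or.inl (hr2.trans ENNReal.one_lt_top).ne)]
    calc μ (B ∩ E) * r < μ (B ∩ E) * 1 :=
          ENNReal.mul_lt_mul_right hpos'.ne' hfin hr2
      _ = μ (B ∩ E) := mul_one _
  obtain ⟨c, hc1, hc2⟩ := exists_between hlt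
  obtain ⟨U, hUsub, hUopen, hUlt⟩ := Set.exists_isOpen_lt_of_lt (B ∩ E) c hc1
  have h1 : μ (B ∩ E) ≤ r * c := le_trans (key U hUopen hUsub) (mul_le_mul_right hUlt.le r)
  have h2 : r * c < μ (B ∩ E) := by
    rw [mul_comm]
    exact (ENNReal.lt_div_iff_mul_lt (Or.inl hr0.ne')
      (Or.inl (hr2.trans ENNReal.one_lt_top).ne)).1 hc2
  exact absurd (lt_of_le_of_lt h1 h2) (lt_irrefl _)

lemma loc_nil (B : Set Cantor) : loc [] B = B := by
  have : cat [] = fun x => x := by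
    funext x n
    simp [cat]
  simp [loc, this]

/-- Climbing lemma: from any node where A has positive localized measure one can reach
measure ≥ r without ever dropping below the starting value along the way. -/
theorem stmt13 (μ : Measure Cantor) (hμ : IsCoin μ) (A : Set Cantor) (hA : MeasurableSet A)
    (s : List Bool) (hs : 0 < μ (loc s A)) (r : ℝ≥0∞) (hr1 : μ (loc s A) < r) (hr2 : r < 1) :
    ∃ t : List Bool, s <+: t ∧ s ≠ t ∧ r ≤ μ (loc t A) ∧
      ∀ u : List Bool, s <+: u → u <+: t → u ≠ t → μ (loc s A) ≤ μ (loc u A) := by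
  classical
  haveI : IsFiniteMeasure μ := coin_finite hμ
  set B := loc s A with hBdef
  have hB : MeasurableSet B := measurableSet_loc hA s
  set m := μ B with hmdef
  have hr0 : 0 < r := lt_trans hs hr1
  -- the union of minimal bad cylinders
  set minBad : Set (List Bool) :=
    {v | μ (loc v B) < m ∧ ∀ w, w <+: v → w ≠ v → ¬ μ (loc w B) < m} with hminBad
  set F : Set Cantor := ⋃ v ∈ minBad, cyl v with hF
  have hdisj : minBad.PairwiseDisjoint cyl := by
    intro v₁ hv₁ v₂ hv₂ hne
    rw [Function.onFun, Set.disjoint_iff_inter_eq_empty]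
    by_contra hcon
    obtain ⟨z, hz1, hz2⟩ := Set.nonempty_iff_ne_empty.2 hcon
    rcases cyl_comparable hz1 hz2 with h | h
    · exact hv₂.2 v₁ h hne hv₁.1
    · exact hv₁.2 v₂ h (Ne.symm hne) hv₂.1
  -- μ (B ∩ F) < m
  have hBF : μ (B ∩ F) < m := by
    rcases Set.eq_empty_or_nonempty minBad with he | ⟨v₀, hv₀⟩
    · rw [hF, he]
      simpa using hs
    · have hsum : μ (B ∩ F) ≤ ∑' v : minBad, μ (B ∩ cyl (v : List Bool)) := by
        have : B ∩ F = ⋃ v ∈ minBad, (B ∩ cyl v) := by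
          rw [hF, Set.inter_iUnion₂]
        rw [this]
        exact measure_biUnion_le μ (Set.to_countable minBad) _
      have hle : ∀ v : minBad, μ (B ∩ cyl (v : List Bool)) ≤
          2⁻¹ ^ (v : List Bool).length * m := by
        intro v
        rw [meas_inter_cyl hμ _ hB]
        exact mul_le_mul_right v.2.1.le _
      have hS : ∑' v : minBad, (2 : ℝ≥0∞)⁻¹ ^ (v : List Bool).length * m ≤ m := by
        have h1 : ∑' v : minBad, (2 : ℝ≥0∞)⁻¹ ^ (v : List Bool).length * m
            = m * ∑' v : minBad, (2 : ℝ≥0∞)⁻¹ ^ (v : List Bool).length := by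
          rw [← ENNReal.tsum_mul_left]
          congr 1; funext v; rw [mul_comm]
        have h2 : ∑' v : minBad, (2 : ℝ≥0∞)⁻¹ ^ (v : List Bool).length = μ F := by
          rw [hF, measure_biUnion (Set.to_countable minBad) hdisj
            fun v _ => measurableSet_cyl v]
          congr 1; funext v; rw [hμ]
        rw [h1, h2]
        calc m * μ F ≤ m * 1 := mul_le_mul_right (by
              rw [← coin_univ hμ]; exact measure_mono (Set.subset_univ F)) m
          _ = m := mul_one m
      have hTne : (∑' v : minBad, μ (B ∩ cyl (v : List Bool))) ≠ ∞ := by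
        refine ne_top_of_le_ne_top ?_ ((ENNReal.tsum_le_tsum hle).trans hS)
        exact (lt_of_le_of_lt (loc_le_one hμ s A) ENNReal.one_lt_top).ne
      have hTS : (∑' v : minBad, μ (B ∩ cyl (v : List Bool))) <
          ∑' v : minBad, (2 : ℝ≥0∞)⁻¹ ^ (v : List Bool).length * m := by
        refine ENNReal.tsum_lt_tsum (i := ⟨v₀, hv₀⟩) hTne hle ?_
        rw [meas_inter_cyl hμ _ hB]
        exact ENNReal.mul_lt_mul_right (pow_ne_zero _ (by simp)) (by
          exact (ENNReal.pow_ne_top (by simp))) hv₀.1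
      exact lt_of_le_of_lt hsum (lt_of_lt_of_le hTS hS)
  -- μ (B ∩ E) = 0
  have hBE : μ (B ∩ {x | ∀ n, μ (loc (seg x n) B) < r}) = 0 :=
    density_zero hμ hB hr0 hr2
  set E := {x : Cantor | ∀ n, μ (loc (seg x n) B) < r} with hE
  -- find a point of B avoiding F and E
  have hex : (B \ (F ∪ E)).Nonempty := by
    by_contra hcon
    rw [Set.not_nonempty_iff_eq_empty, Set.diff_eq_empty] at hcon
    have : μ B ≤ μ (B ∩ F) + μ (B ∩ E) := by
      calc μ B = μ (B ∩ (F ∪ E)) := by rw [Set.inter_eq_left.2 hcon]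
        _ = μ ((B ∩ F) ∪ (B ∩ E)) := by rw [Set.inter_union_distrib_left]
        _ ≤ μ (B ∩ F) + μ (B ∩ E) := measure_union_le _ _
    rw [hBE, add_zero] at this
    exact absurd (lt_of_le_of_lt this hBF) (lt_irrefl _)
  obtain ⟨x, hxB, hxFE⟩ := hex
  have hxF : x ∉ F := fun h => hxFE (Or.inl h)
  have hxE : x ∉ E := fun h => hxFE (Or.inr h)
  -- every node along x has relative measure ≥ m
  have hgood : ∀ k, m ≤ μ (loc (seg x k) B) := by
    by_contra hcon
    push_neg at hcon
    have hexK : ∃ k, μ (loc (seg x k) B) < m := hcon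
    set K := Nat.find hexK with hK
    have hKspec := Nat.find_spec hexK
    have hmem : seg x K ∈ minBad := by
      refine ⟨hKspec, ?_⟩
      intro w hw hwne
      have hw' : w = seg x w.length := prefix_seg hw
      have hlt : w.length < K := by
        have hle : w.length ≤ K := by simpa using hw.length_le
        rcases lt_or_eq_of_le hle with h | h
        · exact h
        · exfalso; apply hwne; rw [hw', h]
      rw [hw']
      exact Nat.find_min hexK hlt
    exact hxF (Set.mem_biUnion hmem (by rw [mem_cyl, seg_length]))
  -- the first node along x with relative measure ≥ r
  have hexN : ∃ n, r ≤ μ (loc (seg x n) B) := by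
    rw [hE, Set.mem_setOf_eq] at hxE
    push_neg at hxE
    exact hxE
  set N := Nat.find hexN with hN
  have hNpos : 0 < N := by
    rcases Nat.eq_zero_or_pos N with h | h
    case inr => exact h
    case inl =>
      exfalso
      have := Nat.find_spec hexN
      rw [← hN, h] at this
      have h0 : seg x 0 = [] := by simp [seg]
      rw [h0, loc_nil] at this
      exact absurd (lt_of_le_of_lt this hr1) (lt_irrefl _)
  refine ⟨s ++ seg x N, List.prefix_append s _, ?_, ?_, ?_⟩
  · intro hcon
    have := congrArg List.length hcon
    simp at this
    omega
  · rw [loc_append]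
    exact Nat.find_spec hexN
  · rintro u ⟨w, rfl⟩ hut hune
    rw [List.prefix_append_right_inj] at hut
    have hw' : w = seg x w.length := prefix_seg hut
    rw [loc_append, hw']
    exact hgood w.length
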